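/- Let u : ℤ → ℝ → ℝ be differentiable in t at every lattice site, let λ be a nonzero real number, and define the 2×2 lattice matrices U(n,t) = [[1, u(n,t)],[λ⁻¹, 0]] and V(n,t) = [[λ/2 − u(n,t), λ·u(n,t)],[1, −λ/2 − u(n−1,t)]]. Then the discrete zero curvature equation ∂_t U(n,t) = V(n+1,t) U(n,t) − U(n,t) V(n,t) holds for all n and t if and only if u satisfies the Bogoyavlensky lattice ∂_t u(n,t) = u(n,t)(u(n−1,t) − u(n+1,t)) for all n and t. -/

import Mathlib

open Matrix

/-- **Example 3 (Bogoyavlensky lattice).**  For `λ ≠ 0`, the 2×2 lattice pair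
`U(n) = [[1, u(n)],[λ⁻¹, 0]]`,
`V(n) = [[λ/2 - u(n), λ u(n)],[1, -λ/2 - u(n-1)]]`
satisfies the discrete zero curvature equation
`∂ₜU(n) = V(n+1)U(n) - U(n)V(n)` for all `n, t` if and only if `u` solves the
Bogoyavlensky lattice `uₜ(n) = u(n)(u(n-1) - u(n+1))`. -/
theorem bogoyavlensky_discrete_zero_curvature
    (u : ℤ → ℝ → ℝ)
    (hu : ∀ n : ℤ, Differentiable ℝ (u n))
    (l : ℝ) (hl : l ≠ 0)
    (U V : ℤ → ℝ → Matrix (Fin 2) (Fin 2) ℝ)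
    (hU : ∀ (n : ℤ) (t : ℝ), U n t = !![1, u n t; l⁻¹, 0])
    (hV : ∀ (n : ℤ) (t : ℝ), V n t =
      !![l / 2 - u n t, l * u n t; 1, -(l / 2) - u (n - 1) t]) :
    (∀ (n : ℤ) (t : ℝ) (i j : Fin 2),
        HasDerivAt (fun s => U n s i j)
          ((V (n + 1) t * U n t - U n t * V n t) i j) t) ↔
      (∀ (n : ℤ) (t : ℝ),
        HasDerivAt (fun s => u n s) (u n t * (u (n - 1) t - u (n + 1) t)) t) := by
  have key : ∀ (n : ℤ) (t : ℝ),
      (V (n + 1) t * U n t - U n t * V n t) 0 1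
        = u n t * (u (n - 1) t - u (n + 1) t) := by
    intro n t
    simp only [hU, hV, Matrix.mul_apply, Matrix.sub_apply, Fin.sum_univ_two]
    have hsub : (n : ℤ) + 1 - 1 = n := by ring
    rw [hsub]
    simp [Matrix.cons_val_zero, Matrix.cons_val_one]
    ring
  constructor
  · intro h n t
    have h01 := h n t 0 1
    rw [key n t] at h01
    have : (fun s => U n s 0 1) = fun s => u n s := by
      funext s; rw [hU]; simp
    rwa [this] at h01
  · intro h n t i j
    fin_cases i <;> fin_cases j
    · show HasDerivAt (fun s => U n s 0 0) ((V (n + 1) t * U n t - U n t * V n t) 0 0) t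
      have : (fun s => U n s 0 0) = fun _ => (1 : ℝ) := by
        funext s; rw [hU]; simp
      rw [this]
      have hz : (V (n + 1) t * U n t - U n t * V n t) 0 0 = 0 := by
        simp only [hU, hV, Matrix.mul_apply, Matrix.sub_apply, Fin.sum_univ_two]
        simp
        field_simp
        ring
      rw [hz]; exact hasDerivAt_const _ _
    · show HasDerivAt (fun s => U n s 0 1) ((V (n + 1) t * U n t - U n t * V n t) 0 1) t
      have : (fun s => U n s 0 1) = fun s => u n s := by
        funext s; rw [hU]; simp
      rw [this, key n t]; exact h n t
    · show HasDerivAt (fun s => U n s 1 0) ((V (n + 1) t * U n t - U n t * V n t) 1 0) t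
      have : (fun s => U n s 1 0) = fun _ => l⁻¹ := by
        funext s; rw [hU]; simp
      rw [this]
      have hz : (V (n + 1) t * U n t - U n t * V n t) 1 0 = 0 := by
        simp only [hU, hV, Matrix.mul_apply, Matrix.sub_apply, Fin.sum_univ_two]
        simp
        field_simp
        ring
      rw [hz]; exact hasDerivAt_const _ _
    · show HasDerivAt (fun s => U n s 1 1) ((V (n + 1) t * U n t - U n t * V n t) 1 1) t
      have : (fun s => U n s 1 1) = fun _ => (0 : ℝ) := by
        funext s; rw [hU]; simp
      rw [this]
      have hz : (V (n + 1) t * U n t - U n t * V n t) 1 1 = 0 := by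
        simp only [hU, hV, Matrix.mul_apply, Matrix.sub_apply, Fin.sum_univ_two]
        simp
        field_simp
        ring
      rw [hz]; exact hasDerivAt_const _ _
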